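/- Define $h : (0,1) \to \mathbb{R}$ by $h(\alpha) = \alpha + \sqrt{1-\alpha} - \alpha \log\left(\frac{1+\sqrt{1-\alpha}}{\sqrt{\alpha}}\right)$. Then $h$ attains its minimum on $(0,1)$ at $\alpha_0 = \left(\frac{2e}{e^2+1}\right)^2$, and the minimum value is $\frac{e^2-1}{e^2+1}$. -/

import Mathlib

noncomputable def h (α : ℝ) : ℝ :=
  α + Real.sqrt (1 - α) - α * Real.log ((1 + Real.sqrt (1 - α)) / Real.sqrt α)

noncomputable def A (t : ℝ) : ℝ := Real.log ((1 + t) / (1 - t)) / 2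

noncomputable def g (t : ℝ) : ℝ := 1 - t ^ 2 + t - (1 - t ^ 2) * A t

lemma hasDerivAt_g {t : ℝ} (h1 : -1 < t) (h2 : t < 1) :
    HasDerivAt g (2 * t * (A t - 1)) t := by
  have hp : (0:ℝ) < 1 + t := by linarith
  have hm : (0:ℝ) < 1 - t := by linarith
  -- A agrees with A' on a neighborhood
  have hAeq : ∀ s ∈ Set.Ioo (-1:ℝ) 1, A s = (Real.log (1 + s) - Real.log (1 - s)) / 2 := by
    intro s hs
    unfold A
    rw [Real.log_div (by linarith [hs.1]) (by linarith [hs.2])]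
  have hA' : HasDerivAt (fun s => (Real.log (1 + s) - Real.log (1 - s)) / 2)
      (1 / (1 - t ^ 2)) t := by
    have d1 : HasDerivAt (fun s : ℝ => Real.log (1 + s)) (1 / (1 + t)) t := by
      have := ((hasDerivAt_id t).const_add 1).log (ne_of_gt hp)
      simpa using this
    have d2 : HasDerivAt (fun s : ℝ => Real.log (1 - s)) (-1 / (1 - t)) t := by
      have := ((hasDerivAt_id t).const_sub 1).log (ne_of_gt hm)
      simpa using this
    have := (d1.sub d2).div_const 2
    have hne : (1:ℝ) - t ^ 2 ≠ 0 := by nlinarith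
    refine this.congr_deriv ?_
    field_simp
    ring
  have hA : HasDerivAt A (1 / (1 - t ^ 2)) t := by
    refine hA'.congr_of_eventuallyEq ?_
    filter_upwards [Ioo_mem_nhds h1 h2] with s hs
    exact hAeq s hs
  have hg : HasDerivAt g (2 * t * (A t - 1)) t := by
    have dsq : HasDerivAt (fun s : ℝ => 1 - s ^ 2) (-(2 * t)) t := by
      have := (hasDerivAt_pow 2 t).const_sub 1
      simpa using this
    have d3 : HasDerivAt (fun s : ℝ => 1 - s ^ 2 + s) (-(2 * t) + 1) t :=
      dsq.add (hasDerivAt_id t)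
    have d4 : HasDerivAt (fun s : ℝ => (1 - s ^ 2) * A s)
        ((-(2 * t)) * A t + (1 - t ^ 2) * (1 / (1 - t ^ 2))) t := dsq.mul hA
    have := d3.sub d4
    have hne : (1 : ℝ) - t ^ 2 ≠ 0 := by nlinarith
    refine this.congr_deriv ?_
    field_simp
    ring
  exact hg

lemma hA_lt {t : ℝ} (ht0 : 0 < t)
    (ht : t < (Real.exp 1 ^ 2 - 1) / (Real.exp 1 ^ 2 + 1)) : A t < 1 := by
  have he : (1:ℝ) < Real.exp 1 := by
    have := Real.exp_one_gt_d9; linarith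
  have he2 : (1:ℝ) < Real.exp 1 ^ 2 := by nlinarith
  have ht1 : t < 1 := lt_of_lt_of_le ht (by
    rw [div_le_one (by positivity)]; linarith)
  have hm : (0:ℝ) < 1 - t := by linarith
  have hfrac : (1 + t) / (1 - t) < Real.exp 1 ^ 2 := by
    rw [div_lt_iff₀ hm]
    have := (lt_div_iff₀ (by positivity : (0:ℝ) < Real.exp 1 ^ 2 + 1)).mp ht
    nlinarith
  have hlog : Real.log ((1 + t) / (1 - t)) < 2 := by
    calc Real.log ((1 + t) / (1 - t)) < Real.log (Real.exp 1 ^ 2) :=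
          Real.log_lt_log (by positivity) hfrac
      _ = 2 := by rw [Real.log_pow, Real.log_exp]; norm_num
  unfold A; linarith

lemma hA_gt {t : ℝ} (ht1 : t < 1)
    (ht : (Real.exp 1 ^ 2 - 1) / (Real.exp 1 ^ 2 + 1) < t) : 1 < A t := by
  have he : (1:ℝ) < Real.exp 1 := by
    have := Real.exp_one_gt_d9; linarith
  have he2 : (1:ℝ) < Real.exp 1 ^ 2 := by nlinarith
  have ht0 : 0 < t := lt_trans (div_pos (by nlinarith) (by positivity)) ht
  have hm : (0:ℝ) < 1 - t := by linarith
  have hfrac : Real.exp 1 ^ 2 < (1 + t) / (1 - t) := by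
    rw [lt_div_iff₀ hm]
    have := (div_lt_iff₀ (by positivity : (0:ℝ) < Real.exp 1 ^ 2 + 1)).mp ht
    nlinarith
  have hlog : 2 < Real.log ((1 + t) / (1 - t)) := by
    calc (2:ℝ) = Real.log (Real.exp 1 ^ 2) := by rw [Real.log_pow, Real.log_exp]; norm_num
      _ < Real.log ((1 + t) / (1 - t)) := Real.log_lt_log (by positivity) hfrac
  unfold A; linarith

lemma contA : ContinuousOn A (Set.Ioo (-1:ℝ) 1) := by
  apply ContinuousOn.div_const
  apply ContinuousOn.log
  · exact (continuous_const.add continuous_id).continuousOn.div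
      (continuous_const.sub continuous_id).continuousOn
      (fun x hx => by have := hx.2; simp only [Set.mem_Ioo] at hx; intro hc; linarith [hx.2, sub_eq_zero.mp hc])
  · intro x hx
    simp only [Set.mem_Ioo] at hx
    have h1 : (0:ℝ) < 1 + x := by linarith [hx.1]
    have h2 : (0:ℝ) < 1 - x := by linarith [hx.2]
    positivity

lemma contg : ContinuousOn g (Set.Ioo (-1:ℝ) 1) := by
  unfold g
  exact ((continuous_const.sub (continuous_pow 2)).continuousOn.add
      continuous_id.continuousOn).sub
    (((continuous_const.sub (continuous_pow 2)).continuousOn).mul contA)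

lemma g_min {t : ℝ} (ht0 : 0 < t) (ht1 : t < 1) :
    g ((Real.exp 1 ^ 2 - 1) / (Real.exp 1 ^ 2 + 1)) ≤ g t := by
  set t₀ := (Real.exp 1 ^ 2 - 1) / (Real.exp 1 ^ 2 + 1) with ht₀
  have he : (1:ℝ) < Real.exp 1 := by
    have := Real.exp_one_gt_d9; linarith
  have he2 : (1:ℝ) < Real.exp 1 ^ 2 := by nlinarith
  have ht₀0 : 0 < t₀ := by rw [ht₀]; exact div_pos (by nlinarith) (by positivity)
  have ht₀1 : t₀ < 1 := by rw [ht₀, div_lt_one (by positivity)]; linarith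
  rcases lt_trichotomy t t₀ with hlt | heq | hgt
  · -- antitone on [t, t₀]
    have anti : StrictAntiOn g (Set.Icc t t₀) := by
      apply strictAntiOn_of_deriv_neg (convex_Icc _ _)
      · exact contg.mono (fun x hx => ⟨by linarith [hx.1], by linarith [hx.2]⟩)
      · intro x hx
        rw [interior_Icc] at hx
        have hx0 : 0 < x := lt_trans ht0 hx.1
        have hx1 : x < 1 := lt_trans hx.2 ht₀1
        rw [(hasDerivAt_g (by linarith) hx1).deriv]
        have : A x < 1 := hA_lt hx0 hx.2
        nlinarith
    exact le_of_lt (anti ⟨le_refl t, le_of_lt hlt⟩ ⟨le_of_lt hlt, le_refl t₀⟩ hlt)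
  · rw [heq]
  · have mono : StrictMonoOn g (Set.Icc t₀ t) := by
      apply strictMonoOn_of_deriv_pos (convex_Icc _ _)
      · exact contg.mono (fun x hx => ⟨by linarith [hx.1], by linarith [hx.2]⟩)
      · intro x hx
        rw [interior_Icc] at hx
        have hx0 : 0 < x := lt_trans ht₀0 hx.1
        have hx1 : x < 1 := lt_trans hx.2 ht1
        rw [(hasDerivAt_g (by linarith) hx1).deriv]
        have : 1 < A x := hA_gt hx1 hx.1
        nlinarith
    exact le_of_lt (mono ⟨le_refl t₀, le_of_lt hgt⟩ ⟨le_of_lt hgt, le_refl t⟩ hgt)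

lemma h_eq_g {α : ℝ} (hα : α ∈ Set.Ioo (0:ℝ) 1) : h α = g (Real.sqrt (1 - α)) := by
  obtain ⟨h0, h1⟩ := hα
  set t := Real.sqrt (1 - α) with htdef
  have ht2 : t ^ 2 = 1 - α := Real.sq_sqrt (by linarith)
  have ht0 : 0 < t := Real.sqrt_pos.mpr (by linarith)
  have ht1 : t < 1 := by
    nlinarith [ht2, ht0]
  have hsα : 0 < Real.sqrt α := Real.sqrt_pos.mpr h0
  have hkey : Real.log ((1 + t) / Real.sqrt α) = A t := by
    have hsq : ((1 + t) / Real.sqrt α) ^ 2 = (1 + t) / (1 - t) := by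
      rw [div_pow, Real.sq_sqrt (le_of_lt h0),
        show α = (1 - t) * (1 + t) by nlinarith,
        div_eq_div_iff (by nlinarith) (by nlinarith)]
      ring
    unfold A
    rw [← hsq, Real.log_pow]
    push_cast
    ring
  unfold h g
  rw [hkey, ← htdef]
  have : α = 1 - t ^ 2 := by linarith
  rw [this]

theorem h_min :
    (∀ α ∈ Set.Ioo (0 : ℝ) 1, h ((2 * Real.exp 1 / (Real.exp 1 ^ 2 + 1)) ^ 2) ≤ h α) ∧
      h ((2 * Real.exp 1 / (Real.exp 1 ^ 2 + 1)) ^ 2)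
        = (Real.exp 1 ^ 2 - 1) / (Real.exp 1 ^ 2 + 1) ∧
      (2 * Real.exp 1 / (Real.exp 1 ^ 2 + 1)) ^ 2 ∈ Set.Ioo (0 : ℝ) 1 := by
  have he : (1:ℝ) < Real.exp 1 := by
    have := Real.exp_one_gt_d9; linarith
  have he2 : (1:ℝ) < Real.exp 1 ^ 2 := by nlinarith
  set e := Real.exp 1
  set α₀ := (2 * e / (e ^ 2 + 1)) ^ 2 with hα₀
  set t₀ := (e ^ 2 - 1) / (e ^ 2 + 1) with ht₀
  have hne : e ^ 2 + 1 ≠ 0 := by positivity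
  have hα₀1 : α₀ < 1 := by
    rw [hα₀]
    have h2e : 2 * e / (e ^ 2 + 1) < 1 := by
      rw [div_lt_one (by positivity)]; nlinarith
    have h2e0 : 0 ≤ 2 * e / (e ^ 2 + 1) := by positivity
    nlinarith
  have hα₀0 : 0 < α₀ := by rw [hα₀]; positivity
  have hmem : α₀ ∈ Set.Ioo (0:ℝ) 1 := ⟨hα₀0, hα₀1⟩
  have hsqrt : Real.sqrt (1 - α₀) = t₀ := by
    have : 1 - α₀ = t₀ ^ 2 := by
      rw [hα₀, ht₀]
      field_simp
      ring
    rw [this, Real.sqrt_sq (le_of_lt (div_pos (by nlinarith) (by positivity)))]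
  have ht₀0 : 0 < t₀ := by rw [ht₀]; exact div_pos (by nlinarith) (by positivity)
  have ht₀1 : t₀ < 1 := by rw [ht₀, div_lt_one (by positivity)]; linarith
  have hA₀ : A t₀ = 1 := by
    unfold A
    have : (1 + t₀) / (1 - t₀) = e ^ 2 := by
      rw [ht₀]
      field_simp
      ring
    rw [this, Real.log_pow, Real.log_exp]
    norm_num
  have hval : h α₀ = t₀ := by
    rw [h_eq_g hmem, hsqrt]
    unfold g
    rw [hA₀]
    ring
  refine ⟨?_, hval, hmem⟩
  intro α hα
  rw [hval, h_eq_g hα]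
  have ht := g_min (Real.sqrt_pos.mpr (by linarith [hα.2] : (0:ℝ) < 1 - α))
    (by
      have : Real.sqrt (1 - α) < Real.sqrt 1 :=
        Real.sqrt_lt_sqrt (by linarith [hα.2]) (by linarith [hα.1])
      simpa using this)
  calc t₀ = g t₀ := by unfold g; rw [hA₀]; ring
    _ ≤ g (Real.sqrt (1 - α)) := ht
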